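/- Fix ε ∈ (0,1) and c > 0, and let t0 < t1 with τ := t1 − t0 satisfying: τ < ε·R_min²/c, τ < R_min/(2‖R'‖), and τ < 2√(1+√(1−ε²))·R_min/√‖(R²)''‖. Then the Dirichlet solution r satisfies: r''(t) = c²/r(t)³ for all t ∈ (t0,t1); r(t0) = R(t0) and r(t1) = R(t1); r(t) < R(t) for all t ∈ (t0,t1); r'(t0) < min{0, R'(t0)}; and r'(t1) > max{0, 2R'(t1)}. -/

import Mathlib

set_option maxHeartbeats 4000000


noncomputable section

/-- Sup-norm of a function (for a continuous 1-periodic function this is the maximum of `|f|`). -/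
def supNorm (f : ℝ → ℝ) : ℝ := sSup (Set.range fun t => |f t|)

/-- Minimum value of `R` (attained for a continuous 1-periodic `R`). -/
def Rmin (R : ℝ → ℝ) : ℝ := sInf (Set.range R)

/-- Maximum value of `R` (attained for a continuous 1-periodic `R`). -/
def Rmax (R : ℝ → ℝ) : ℝ := sSup (Set.range R)

/-- The constant `σ = min { R_min/(2‖R'‖) , 2√(1+√(1−ε²))·R_min/√‖(R²)''‖ }`. -/
def sigmaR (R : ℝ → ℝ) (ε : ℝ) : ℝ :=
  min (Rmin R / (2 * supNorm (deriv R)))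
    (2 * Real.sqrt (1 + Real.sqrt (1 - ε ^ 2)) * Rmin R /
      Real.sqrt (supNorm (deriv (deriv (fun t => R t ^ 2)))))

/-- `√(R(t0)²R(t1)² − c²(t1−t0)²)`. -/
def Ssq (R : ℝ → ℝ) (c t0 t1 : ℝ) : ℝ :=
  Real.sqrt (R t0 ^ 2 * R t1 ^ 2 - c ^ 2 * (t1 - t0) ^ 2)

/-- `A(t0,t1) = (R(t0)² + R(t1)² + 2√(R(t0)²R(t1)² − c²(t1−t0)²))/(t1−t0)²`. -/
def Afun (R : ℝ → ℝ) (c t0 t1 : ℝ) : ℝ :=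
  (R t0 ^ 2 + R t1 ^ 2 + 2 * Ssq R c t0 t1) / (t1 - t0) ^ 2

/-- `B = −( t0 + (R(t0)² + √(R(t0)²R(t1)² − c²(t1−t0)²))/((t1−t0)·A) )`. -/
def Bfun (R : ℝ → ℝ) (c t0 t1 : ℝ) : ℝ :=
  -(t0 + (R t0 ^ 2 + Ssq R c t0 t1) / ((t1 - t0) * Afun R c t0 t1))

/-- The Dirichlet solution `r(t) = √((A²(t+B)² + c²)/A)`. -/
def dirich (R : ℝ → ℝ) (c t0 t1 t : ℝ) : ℝ :=
  Real.sqrt ((Afun R c t0 t1 ^ 2 * (t + Bfun R c t0 t1) ^ 2 + c ^ 2) / Afun R c t0 t1)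

/-- The generating function
`h(t0,t1) = ½(t1−t0)·A(t0,t1) + c·arctan( c(t1−t0)/√(R(t0)²R(t1)² − c²(t1−t0)²) )`. -/
def hgen (R : ℝ → ℝ) (c t0 t1 : ℝ) : ℝ :=
  (1 / 2) * (t1 - t0) * Afun R c t0 t1 +
    c * Real.arctan (c * (t1 - t0) / Ssq R c t0 t1)

/-- `∂₁h`, the partial derivative of `h` in its first argument. -/
def d1h (R : ℝ → ℝ) (c t0 t1 : ℝ) : ℝ := deriv (fun s => hgen R c s t1) t0

/-- `∂₂h`, the partial derivative of `h` in its second argument. -/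
def d2h (R : ℝ → ℝ) (c t0 t1 : ℝ) : ℝ := deriv (fun s => hgen R c t0 s) t1

/-- `∂₁₂h`, the mixed second partial derivative of `h`. -/
def d12h (R : ℝ → ℝ) (c t0 t1 : ℝ) : ℝ := deriv (fun s => d1h R c t0 s) t1

-- Auxiliary lemmas
lemma periodic_abs_le_supNorm (f : ℝ → ℝ) (hf : Continuous f) (hp : Function.Periodic f 1)
    (t : ℝ) : |f t| ≤ supNorm f := by
  have hp' : Function.Periodic (fun t => |f t|) 1 := fun x => by simp [hp x]
  have himg : (fun t => |f t|) '' Set.Icc 0 (0 + 1) = Set.range (fun t => |f t|) :=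
    hp'.image_Icc one_pos 0
  refine le_csSup ?_ ⟨t, rfl⟩
  rw [← himg]
  exact (isCompact_Icc.image hf.abs).bddAbove

lemma supNorm_nonneg' (f : ℝ → ℝ) (hf : Continuous f) (hp : Function.Periodic f 1) :
    0 ≤ supNorm f := le_trans (abs_nonneg _) (periodic_abs_le_supNorm f hf hp 0)

lemma Rmin_le' (R : ℝ → ℝ) (hpos : ∀ t, 0 < R t) (t : ℝ) : Rmin R ≤ R t :=
  csInf_le ⟨0, by rintro x ⟨s, rfl⟩; exact (hpos s).le⟩ ⟨t, rfl⟩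

lemma Rmin_pos' (R : ℝ → ℝ) (hf : Continuous R) (hp : Function.Periodic R 1)
    (hpos : ∀ t, 0 < R t) : 0 < Rmin R := by
  have himg : R '' Set.Icc 0 (0 + 1) = Set.range R := hp.image_Icc one_pos 0
  have hcomp : IsCompact (Set.range R) := by rw [← himg]; exact isCompact_Icc.image hf
  obtain ⟨s, hs⟩ := hcomp.sInf_mem ⟨R 0, 0, rfl⟩
  rw [Rmin, ← hs]; exact hpos s

lemma periodic_deriv' (f : ℝ → ℝ) (hp : Function.Periodic f 1) :
    Function.Periodic (deriv f) 1 := by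
  intro t
  have h1 : (fun s => f (s + 1)) = f := funext hp
  calc deriv f (t + 1) = deriv (fun s => f (s + 1)) t := (deriv_comp_add_const f 1 t).symm
    _ = deriv f t := by rw [h1]

lemma rfun_hasDeriv (A B c : ℝ) (hA : 0 < A) (hc : 0 < c) (t : ℝ) :
    HasDerivAt (fun s => Real.sqrt ((A ^ 2 * (s + B) ^ 2 + c ^ 2) / A))
      (A * (t + B) / Real.sqrt ((A ^ 2 * (t + B) ^ 2 + c ^ 2) / A)) t := by
  have hgt : 0 < (A ^ 2 * (t + B) ^ 2 + c ^ 2) / A := by positivity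
  have h1 : HasDerivAt (fun s : ℝ => (s + B) ^ 2) (2 * (t + B)) t := by
    simpa using ((hasDerivAt_id t).add_const B).fun_pow 2
  have hg : HasDerivAt (fun s => (A ^ 2 * (s + B) ^ 2 + c ^ 2) / A)
      (A ^ 2 * (2 * (t + B)) / A) t := ((h1.const_mul (A ^ 2)).add_const (c ^ 2)).div_const A
  have := (Real.hasDerivAt_sqrt hgt.ne').comp t hg
  refine this.congr_deriv ?_
  have hs : Real.sqrt ((A ^ 2 * (t + B) ^ 2 + c ^ 2) / A) ≠ 0 :=
    (Real.sqrt_pos.mpr hgt).ne'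
  field_simp

lemma rfun_sq (A B c : ℝ) (hA : 0 < A) (hc : 0 < c) (t : ℝ) :
    Real.sqrt ((A ^ 2 * (t + B) ^ 2 + c ^ 2) / A) ^ 2 = (A ^ 2 * (t + B) ^ 2 + c ^ 2) / A :=
  Real.sq_sqrt (by positivity)

lemma rfun_deriv2 (A B c : ℝ) (hA : 0 < A) (hc : 0 < c) (t : ℝ) :
    deriv (deriv (fun s => Real.sqrt ((A ^ 2 * (s + B) ^ 2 + c ^ 2) / A))) t
      = c ^ 2 / Real.sqrt ((A ^ 2 * (t + B) ^ 2 + c ^ 2) / A) ^ 3 := by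
  have hderiv : deriv (fun s => Real.sqrt ((A ^ 2 * (s + B) ^ 2 + c ^ 2) / A))
      = fun s => A * (s + B) / Real.sqrt ((A ^ 2 * (s + B) ^ 2 + c ^ 2) / A) :=
    funext fun s => (rfun_hasDeriv A B c hA hc s).deriv
  rw [hderiv]
  have hrt : 0 < Real.sqrt ((A ^ 2 * (t + B) ^ 2 + c ^ 2) / A) :=
    Real.sqrt_pos.mpr (by positivity)
  set r := Real.sqrt ((A ^ 2 * (t + B) ^ 2 + c ^ 2) / A) with hrdef
  have hr2 : r ^ 2 = (A ^ 2 * (t + B) ^ 2 + c ^ 2) / A := rfun_sq A B c hA hc t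
  have hnum : HasDerivAt (fun s : ℝ => A * (s + B)) A t := by
    simpa using ((hasDerivAt_id t).add_const B).const_mul A
  have hden : HasDerivAt (fun s => Real.sqrt ((A ^ 2 * (s + B) ^ 2 + c ^ 2) / A))
      (A * (t + B) / r) t := rfun_hasDeriv A B c hA hc t
  have hd := (hnum.fun_div hden hrt.ne').deriv
  rw [hd, ← hrdef]
  have key : A * r ^ 2 = A ^ 2 * (t + B) ^ 2 + c ^ 2 := by
    rw [hr2]; field_simp
  have h3 : A * r - A * (t + B) * (A * (t + B) / r) = c ^ 2 / r := by
    field_simp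
    linear_combination key
  rw [h3, div_div]
  ring

/-- Under the time-gap conditions of Proposition 3.1 the Dirichlet solution
`r` solves the Dirichlet problem: `r'' = c²/r³` on `(t0,t1)`, `r(t0) = R(t0)`, `r(t1) = R(t1)`,
`r < R` on `(t0,t1)`, `r'(t0) < min{0, R'(t0)}` and `r'(t1) > max{0, 2R'(t1)}`. -/
theorem dirichlet_solution_properties (R : ℝ → ℝ) (ε c t0 t1 : ℝ)
    (hC : ContDiff ℝ 2 R) (hper : ∀ t, R (t + 1) = R t) (hpos : ∀ t, 0 < R t)
    (hnc : ∃ a b, R a ≠ R b)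
    (hε : ε ∈ Set.Ioo (0 : ℝ) 1) (hc : 0 < c) (ht : t0 < t1)
    (hτ1 : t1 - t0 < ε * Rmin R ^ 2 / c)
    (hτ2 : t1 - t0 < Rmin R / (2 * supNorm (deriv R)))
    (hτ3 : t1 - t0 < 2 * Real.sqrt (1 + Real.sqrt (1 - ε ^ 2)) * Rmin R /
      Real.sqrt (supNorm (deriv (deriv (fun t => R t ^ 2))))) :
    (∀ t ∈ Set.Ioo t0 t1,
        deriv (deriv (dirich R c t0 t1)) t = c ^ 2 / dirich R c t0 t1 t ^ 3) ∧
    dirich R c t0 t1 t0 = R t0 ∧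
    dirich R c t0 t1 t1 = R t1 ∧
    (∀ t ∈ Set.Ioo t0 t1, dirich R c t0 t1 t < R t) ∧
    deriv (dirich R c t0 t1) t0 < min 0 (deriv R t0) ∧
    deriv (dirich R c t0 t1) t1 > max 0 (2 * deriv R t1) := by
  obtain ⟨hε0, hε1⟩ := hε
  have hτ : 0 < t1 - t0 := sub_pos.mpr ht
  have hRcont : Continuous R := hC.continuous
  have hRper : Function.Periodic R 1 := hper
  have hm : 0 < Rmin R := Rmin_pos' R hRcont hRper hpos
  have ha : 0 < R t0 := hpos t0
  have hb : 0 < R t1 := hpos t1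
  have hma : Rmin R ≤ R t0 := Rmin_le' R hpos t0
  have hmb : Rmin R ≤ R t1 := Rmin_le' R hpos t1
  have hval : ∀ t, dirich R c t0 t1 t =
      Real.sqrt ((Afun R c t0 t1 ^ 2 * (t + Bfun R c t0 t1) ^ 2 + c ^ 2) / Afun R c t0 t1) :=
    fun _ => rfl
  have hfun : dirich R c t0 t1 = fun t =>
      Real.sqrt ((Afun R c t0 t1 ^ 2 * (t + Bfun R c t0 t1) ^ 2 + c ^ 2) / Afun R c t0 t1) := rfl
  have hAeq : Afun R c t0 t1 =
      (R t0 ^ 2 + R t1 ^ 2 + 2 * Ssq R c t0 t1) / (t1 - t0) ^ 2 := rfl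
  have hBeq : Bfun R c t0 t1 =
      -(t0 + (R t0 ^ 2 + Ssq R c t0 t1) / ((t1 - t0) * Afun R c t0 t1)) := rfl
  have hSeq : Ssq R c t0 t1 =
      Real.sqrt (R t0 ^ 2 * R t1 ^ 2 - c ^ 2 * (t1 - t0) ^ 2) := rfl
  -- abbreviations
  set τ := t1 - t0 with hτdef
  set a := R t0 with hadef
  set b := R t1 with hbdef
  set m := Rmin R with hmdef
  set L := supNorm (deriv R) with hLdef
  set M := supNorm (deriv (deriv (fun t => R t ^ 2))) with hMdef
  set S := Ssq R c t0 t1 with hSdef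
  set A := Afun R c t0 t1 with hAdef
  set B := Bfun R c t0 t1 with hBdef2
  clear_value τ a b m L M S A B
  -- basic inequalities
  have hm2a : m ^ 2 ≤ a ^ 2 := by nlinarith only [hm, hma]
  have hm2b : m ^ 2 ≤ b ^ 2 := by nlinarith only [hm, hmb]
  have hm4 : m ^ 4 ≤ a ^ 2 * b ^ 2 := by nlinarith only [hm2a, hm2b, hm, hma, hmb, sq_nonneg m]
  have hcτ : c * τ < ε * m ^ 2 := by
    rw [lt_div_iff₀ hc] at hτ1
    linarith only [hτ1]
  have hcτ2 : c ^ 2 * τ ^ 2 < ε ^ 2 * m ^ 4 := by nlinarith only [hcτ, mul_pos hc hτ]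
  have hε2 : ε ^ 2 < 1 := by nlinarith only [hε0, hε1]
  have hεm : ε ^ 2 * m ^ 4 ≤ m ^ 4 := by nlinarith only [hε2, sq_nonneg (m ^ 2)]
  have hSin : 0 < a ^ 2 * b ^ 2 - c ^ 2 * τ ^ 2 := by linarith only [hcτ2, hεm, hm4]
  have hS : 0 < S := by rw [hSeq]; exact Real.sqrt_pos.mpr hSin
  have hS2 : S ^ 2 = a ^ 2 * b ^ 2 - c ^ 2 * τ ^ 2 := by
    rw [hSeq]; exact Real.sq_sqrt hSin.le
  have h1e : 0 ≤ 1 - ε ^ 2 := by linarith only [hε2]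
  have hSm : Real.sqrt (1 - ε ^ 2) * m ^ 2 < S := by
    have h1 : (Real.sqrt (1 - ε ^ 2) * m ^ 2) ^ 2 = (1 - ε ^ 2) * m ^ 4 := by
      rw [mul_pow, Real.sq_sqrt h1e]; ring
    nlinarith only [h1, Real.sqrt_nonneg (1 - ε ^ 2), hm, hS, hS2, hcτ2, hm4]
  have hApos : 0 < A := by
    rw [hAeq]
    have : 0 < a ^ 2 + b ^ 2 + 2 * S := by positivity
    positivity
  have hAτ : A * τ ^ 2 = a ^ 2 + b ^ 2 + 2 * S := by
    rw [hAeq]; field_simp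
  have h1 : A * (t0 + B) * τ = -(a ^ 2 + S) := by
    rw [hBeq]; field_simp; ring
  have ht1' : t1 = τ + t0 := by rw [hτdef]; ring
  have h2 : A * (t1 + B) * τ = b ^ 2 + S := by
    calc A * (t1 + B) * τ = A * (t0 + B) * τ + A * τ ^ 2 := by rw [ht1']; ring
    _ = b ^ 2 + S := by rw [h1, hAτ]; ring
  have key0 : A ^ 2 * (t0 + B) ^ 2 + c ^ 2 = A * a ^ 2 := by
    have hq : (A * (t0 + B) * τ) ^ 2 = (a ^ 2 + S) ^ 2 := by rw [h1]; ring
    have hmain : (A ^ 2 * (t0 + B) ^ 2 + c ^ 2) * τ ^ 2 = A * a ^ 2 * τ ^ 2 := by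
      linear_combination hq + hS2 - a ^ 2 * hAτ
    exact mul_right_cancel₀ (pow_ne_zero 2 hτ.ne') hmain
  have key1 : A ^ 2 * (t1 + B) ^ 2 + c ^ 2 = A * b ^ 2 := by
    have hq : (A * (t1 + B) * τ) ^ 2 = (b ^ 2 + S) ^ 2 := by rw [h2]
    have hmain : (A ^ 2 * (t1 + B) ^ 2 + c ^ 2) * τ ^ 2 = A * b ^ 2 * τ ^ 2 := by
      linear_combination hq + hS2 - b ^ 2 * hAτ
    exact mul_right_cancel₀ (pow_ne_zero 2 hτ.ne') hmain
  have key0' : (A ^ 2 * (t0 + B) ^ 2 + c ^ 2) / A = a ^ 2 := by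
    rw [key0]; field_simp
  have key1' : (A ^ 2 * (t1 + B) ^ 2 + c ^ 2) / A = b ^ 2 := by
    rw [key1]; field_simp
  have hr0 : dirich R c t0 t1 t0 = a := by
    rw [hval t0, key0']; exact Real.sqrt_sq ha.le
  have hr1 : dirich R c t0 t1 t1 = b := by
    rw [hval t1, key1']; exact Real.sqrt_sq hb.le
  -- sup norm facts for deriv R
  have hdRcont : Continuous (deriv R) := hC.continuous_deriv (by norm_num)
  have hdRper : Function.Periodic (deriv R) 1 := periodic_deriv' R hRper
  have hLb : ∀ x, |deriv R x| ≤ L := by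
    rw [hLdef]; exact periodic_abs_le_supNorm _ hdRcont hdRper
  have hLnn : 0 ≤ L := by rw [hLdef]; exact supNorm_nonneg' _ hdRcont hdRper
  have hLτ : 2 * L * τ < m := by
    rcases eq_or_lt_of_le hLnn with h0 | hLpos
    · rw [← h0]; simpa using hm
    · rw [lt_div_iff₀ (by positivity)] at hτ2
      linarith only [hτ2]
  -- second derivative of R^2 facts
  have hR2 : ContDiff ℝ 2 (fun t => R t ^ 2) := hC.pow 2
  rw [show (2 : WithTop ℕ∞) = 1 + 1 from by norm_num] at hR2
  obtain ⟨hdiffR2, -, hC1⟩ := contDiff_succ_iff_deriv.mp hR2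
  rw [show (1 : WithTop ℕ∞) = 0 + 1 from by norm_num] at hC1
  obtain ⟨hdiffdR2, -, hC0⟩ := contDiff_succ_iff_deriv.mp hC1
  have hcontdd : Continuous (deriv (deriv fun t => R t ^ 2)) := hC0.continuous
  have hperR2 : Function.Periodic (fun t => R t ^ 2) 1 := fun x => by simp [hper x]
  have hperd2 : Function.Periodic (deriv (deriv fun t => R t ^ 2)) 1 :=
    periodic_deriv' _ (periodic_deriv' _ hperR2)
  have hMb : ∀ x, |deriv (deriv fun t => R t ^ 2) x| ≤ M := by
    rw [hMdef]; exact periodic_abs_le_supNorm _ hcontdd hperd2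
  have hMnn : 0 ≤ M := by rw [hMdef]; exact supNorm_nonneg' _ hcontdd hperd2
  have hM4 : τ ^ 2 * M < 4 * (1 + Real.sqrt (1 - ε ^ 2)) * m ^ 2 := by
    rcases eq_or_lt_of_le hMnn with h0 | hMpos
    · rw [← h0, mul_zero]
      have h6 : 0 < m ^ 2 := pow_pos hm 2
      have h7 : 0 < 1 + Real.sqrt (1 - ε ^ 2) := by positivity
      nlinarith only [mul_pos h7 h6]
    · have hsM : 0 < Real.sqrt M := Real.sqrt_pos.mpr hMpos
      rw [lt_div_iff₀ hsM] at hτ3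
      have hMsq : Real.sqrt M ^ 2 = M := Real.sq_sqrt hMnn
      have h4 : (2 * Real.sqrt (1 + Real.sqrt (1 - ε ^ 2)) * m) ^ 2
          = 4 * (1 + Real.sqrt (1 - ε ^ 2)) * m ^ 2 := by
        rw [mul_pow, mul_pow, Real.sq_sqrt (by positivity)]; ring
      have h5 : (τ * Real.sqrt M) ^ 2 < (2 * Real.sqrt (1 + Real.sqrt (1 - ε ^ 2)) * m) ^ 2 := by
        apply pow_lt_pow_left₀ hτ3 (mul_pos hτ hsM).le
        norm_num
      calc τ ^ 2 * M = (τ * Real.sqrt M) ^ 2 := by rw [mul_pow, hMsq]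
      _ < (2 * Real.sqrt (1 + Real.sqrt (1 - ε ^ 2)) * m) ^ 2 := h5
      _ = 4 * (1 + Real.sqrt (1 - ε ^ 2)) * m ^ 2 := h4
  have h2A : M < 2 * A := by
    have hge : 4 * (1 + Real.sqrt (1 - ε ^ 2)) * m ^ 2 ≤ 2 * A * τ ^ 2 := by
      have e1 : 2 * A * τ ^ 2 = 2 * a ^ 2 + 2 * b ^ 2 + 4 * S := by linear_combination 2 * hAτ
      rw [e1]
      linarith only [hm2a, hm2b, hSm]
    have hlt : τ ^ 2 * M < τ ^ 2 * (2 * A) := by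
      calc τ ^ 2 * M < 4 * (1 + Real.sqrt (1 - ε ^ 2)) * m ^ 2 := hM4
      _ ≤ 2 * A * τ ^ 2 := hge
      _ = τ ^ 2 * (2 * A) := by ring
    exact lt_of_mul_lt_mul_left hlt (sq_nonneg τ)
  -- the comparison function f
  set f := fun t => R t ^ 2 - (A ^ 2 * (t + B) ^ 2 + c ^ 2) / A with hfdef
  clear_value f
  have hfc : Continuous f := by
    rw [hfdef]
    fun_prop
  have hd1 : ∀ x, HasDerivAt f (deriv (fun t => R t ^ 2) x - A ^ 2 * (2 * (x + B)) / A) x := by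
    intro x
    rw [hfdef]
    have hh1 : HasDerivAt (fun t => R t ^ 2) (deriv (fun t => R t ^ 2) x) x :=
      (hdiffR2 x).hasDerivAt
    have h3 : HasDerivAt (fun t : ℝ => (t + B) ^ 2) (2 * (x + B)) x := by
      simpa using ((hasDerivAt_id x).add_const B).fun_pow 2
    have hh2 : HasDerivAt (fun t : ℝ => (A ^ 2 * (t + B) ^ 2 + c ^ 2) / A)
        (A ^ 2 * (2 * (x + B)) / A) x := ((h3.const_mul (A ^ 2)).add_const (c ^ 2)).div_const A
    exact hh1.sub hh2
  have hderivf : deriv f = fun x => deriv (fun t => R t ^ 2) x - A ^ 2 * (2 * (x + B)) / A :=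
    funext fun x => (hd1 x).deriv
  have hd2 : ∀ x, HasDerivAt (deriv f) (deriv (deriv fun t => R t ^ 2) x - 2 * A) x := by
    intro x
    rw [hderivf]
    have hh1 : HasDerivAt (fun y => deriv (fun t => R t ^ 2) y)
        (deriv (deriv fun t => R t ^ 2) x) x := (hdiffdR2 x).hasDerivAt
    have hh2 : HasDerivAt (fun y : ℝ => A ^ 2 * (2 * (y + B)) / A) (2 * A) x := by
      have h3 : HasDerivAt (fun y : ℝ => A ^ 2 * (2 * (y + B))) (A ^ 2 * 2) x := by
        simpa using (((hasDerivAt_id x).add_const B).const_mul 2).const_mul (A ^ 2)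
      have h4 := h3.div_const A
      refine h4.congr_deriv ?_
      field_simp
    exact hh1.sub hh2
  have hneg : ∀ x, deriv^[2] f x < 0 := by
    intro x
    have hiter : deriv^[2] f = deriv (deriv f) := by
      simp [Function.iterate_succ_apply']
    rw [hiter, (hd2 x).deriv]
    have habs := abs_le.mp (hMb x)
    linarith only [habs.2, h2A]
  have hconc : StrictConcaveOn ℝ (Set.Icc t0 t1) f :=
    strictConcaveOn_of_deriv2_neg' (convex_Icc t0 t1) hfc.continuousOn (fun x _ => hneg x)
  have hf0 : f t0 = 0 := by
    simp only [hfdef]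
    rw [key0', ← hadef]; ring
  have hf1 : f t1 = 0 := by
    simp only [hfdef]
    rw [key1', ← hbdef]; ring
  refine ⟨?_, hr0, hr1, ?_, ?_, ?_⟩
  · -- ODE
    intro t _
    rw [hval t, hfun]
    exact rfun_deriv2 A B c hApos hc t
  · -- r < R on Ioo
    intro t htI
    obtain ⟨ht0, ht1⟩ := htI
    have hμ : 0 < (t1 - t) / τ := div_pos (by linarith only [ht1]) hτ
    have hν : 0 < (t - t0) / τ := div_pos (by linarith only [ht0]) hτ
    have hsum : (t1 - t) / τ + (t - t0) / τ = 1 := by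
      have e : t1 - t + (t - t0) = τ := by rw [hτdef]; ring
      rw [← add_div, e, div_self hτ.ne']
    have hcomb := hconc.2 (Set.left_mem_Icc.mpr ht.le) (Set.right_mem_Icc.mpr ht.le)
      (ne_of_lt ht) hμ hν hsum
    simp only [smul_eq_mul] at hcomb
    have hpt : (t1 - t) / τ * t0 + (t - t0) / τ * t1 = t := by
      rw [div_mul_eq_mul_div, div_mul_eq_mul_div, ← add_div, div_eq_iff hτ.ne', hτdef]
      ring
    rw [hf0, hf1, hpt] at hcomb
    have hft : 0 < f t := by simpa using hcomb
    have hft' : (A ^ 2 * (t + B) ^ 2 + c ^ 2) / A < R t ^ 2 := by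
      simp only [hfdef] at hft
      linarith only [hft]
    have hGpos : 0 < (A ^ 2 * (t + B) ^ 2 + c ^ 2) / A :=
      div_pos (add_pos_of_nonneg_of_pos (by positivity) (pow_pos hc 2)) hApos
    rw [hval t]
    calc Real.sqrt ((A ^ 2 * (t + B) ^ 2 + c ^ 2) / A)
        < Real.sqrt (R t ^ 2) := Real.sqrt_lt_sqrt hGpos.le hft'
    _ = R t := Real.sqrt_sq (hpos t).le
  · -- derivative at t0
    have hd0 : deriv (dirich R c t0 t1) t0 = A * (t0 + B) / a := by
      rw [hfun, (rfun_hasDeriv A B c hApos hc t0).deriv, key0', Real.sqrt_sq ha.le]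
    have hAB0 : A * (t0 + B) = -((a ^ 2 + S) / τ) := by
      rw [← neg_div, eq_div_iff hτ.ne']
      exact h1
    rw [hd0, hAB0]
    have hstep : L < a ^ 2 + S → True := fun _ => trivial
    have hkey : L * (τ * a) < a ^ 2 + S := by
      linarith only [mul_lt_mul_of_pos_right hLτ ha, mul_le_mul_of_nonneg_right hma ha.le,
        hS, mul_nonneg (mul_nonneg hLnn hτ.le) ha.le]
    have hpos' : 0 < (a ^ 2 + S) / τ / a := by positivity
    apply lt_min
    · have : -((a ^ 2 + S) / τ) / a = -((a ^ 2 + S) / τ / a) := by ring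
      rw [this]
      linarith only [hpos']
    · have hLlt : L < (a ^ 2 + S) / τ / a := by
        rw [div_div, lt_div_iff₀ (by positivity)]
        exact hkey
      have hder := (abs_le.mp (hLb t0)).1
      have : -((a ^ 2 + S) / τ) / a = -((a ^ 2 + S) / τ / a) := by ring
      rw [this]
      linarith only [hLlt, hder]
  · -- derivative at t1
    have hd1' : deriv (dirich R c t0 t1) t1 = A * (t1 + B) / b := by
      rw [hfun, (rfun_hasDeriv A B c hApos hc t1).deriv, key1', Real.sqrt_sq hb.le]
    have hAB1 : A * (t1 + B) = (b ^ 2 + S) / τ := by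
      rw [eq_div_iff hτ.ne']
      linarith [h2]
    rw [hd1', hAB1]
    have hkey : 2 * L * (τ * b) < b ^ 2 + S := by
      linarith only [mul_lt_mul_of_pos_right hLτ hb, mul_le_mul_of_nonneg_right hmb hb.le, hS,
        mul_nonneg (mul_nonneg hLnn hτ.le) hb.le]
    apply max_lt
    · positivity
    · have hLlt : 2 * L < (b ^ 2 + S) / τ / b := by
        rw [div_div, lt_div_iff₀ (by positivity)]
        exact hkey
      have hder := (abs_le.mp (hLb t1)).2
      linarith only [hLlt, hder]
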